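/- Let H be a bialgebra over a commutative ring R, n a natural number, and t^1, …, t^n : H → R R-linear functionals. Define d : H → H^n by (d a)_k = t^k_L(a) = Σ a_(1) t^k(a_(2)), the left H-action on H^n by (a • v)_k = a · v_k, and the left coaction Δ_L : H^n → (H ⊗ H)^n componentwise by (Δ_L v)_k = Δ(v_k), where (H ⊗ H)^n is a module over H ⊗ H componentwise. Then for all a, b ∈ H: Δ_L(a • d b) = Δ(a) · ( Σ b_(1) ⊗ d(b_(2)) ), meaning componentwise (Δ_L(a • d b))_k = Δ(a) · (Σ b_(1) ⊗ t^k_L(b_(2))). This is the left covariance of the first-order differential calculus (Proposition 5(ii)). -/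
import Mathlib


open TensorProduct

/-- The left-invariant vector field `t_L(a) = Σ a_(1) t(a_(2))`. -/
noncomputable def tL (R C : Type*) [CommRing R] [AddCommGroup C] [Module R C]
    [Coalgebra R C] (t : C →ₗ[R] R) : C →ₗ[R] C :=
  (TensorProduct.rid R C).toLinearMap ∘ₗ (LinearMap.lTensor C t) ∘ₗ Coalgebra.comul

lemma comul_tL (R C : Type*) [CommRing R] [AddCommGroup C] [Module R C]
    [Coalgebra R C] (t : C →ₗ[R] R) (b : C) :
    Coalgebra.comul (R := R) (tL R C t b) =
      LinearMap.lTensor C (tL R C t) (Coalgebra.comul (R := R) b) := by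
  have h : Coalgebra.comul (R := R) ∘ₗ tL R C t =
      LinearMap.lTensor C (tL R C t) ∘ₗ Coalgebra.comul := by
    unfold tL
    have key : ((TensorProduct.rid R (C ⊗[R] C)).toLinearMap ∘ₗ
          LinearMap.lTensor (C ⊗[R] C) t) ∘ₗ
          (TensorProduct.assoc R C C C).symm.toLinearMap =
        LinearMap.lTensor C ((TensorProduct.rid R C).toLinearMap ∘ₗ
          LinearMap.lTensor C t) := by
      apply TensorProduct.ext
      apply LinearMap.ext; intro x
      apply TensorProduct.ext'
      intro y z
      simp
    calc Coalgebra.comul ∘ₗ ((TensorProduct.rid R C).toLinearMap ∘ₗ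
          LinearMap.lTensor C t ∘ₗ Coalgebra.comul)
        = ((TensorProduct.rid R (C ⊗[R] C)).toLinearMap ∘ₗ
            LinearMap.rTensor R (Coalgebra.comul (R := R) (A := C))) ∘ₗ
            LinearMap.lTensor C t ∘ₗ Coalgebra.comul := by
          apply LinearMap.ext; intro x
          simp [TensorProduct.rid_tmul]
          induction (LinearMap.lTensor C t (Coalgebra.comul x)) using
            TensorProduct.induction_on with
          | zero => simp
          | tmul c r => simp [TensorProduct.smul_tmul']
          | add u v hu hv => simp [map_add, hu, hv]
      _ = (TensorProduct.rid R (C ⊗[R] C)).toLinearMap ∘ₗ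
            LinearMap.lTensor (C ⊗[R] C) t ∘ₗ
            LinearMap.rTensor C (Coalgebra.comul (R := R) (A := C)) ∘ₗ
            Coalgebra.comul := by
          have hcomm : LinearMap.rTensor R (Coalgebra.comul (R := R) (A := C)) ∘ₗ
              LinearMap.lTensor C t =
              LinearMap.lTensor (C ⊗[R] C) t ∘ₗ
                LinearMap.rTensor C (Coalgebra.comul (R := R) (A := C)) := by
            rw [LinearMap.rTensor_comp_lTensor, LinearMap.lTensor_comp_rTensor]
          apply LinearMap.ext; intro x
          simp only [LinearMap.comp_apply]
          rw [← LinearMap.comp_apply (LinearMap.rTensor R _) (LinearMap.lTensor C t), hcomm]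
          simp only [LinearMap.comp_apply, ← LinearMap.comp_apply
            (LinearMap.lTensor (C ⊗[R] C) t), LinearMap.lTensor_comp_rTensor]
      _ = (TensorProduct.rid R (C ⊗[R] C)).toLinearMap ∘ₗ
            LinearMap.lTensor (C ⊗[R] C) t ∘ₗ
            (TensorProduct.assoc R C C C).symm.toLinearMap ∘ₗ
            LinearMap.lTensor C (Coalgebra.comul (R := R) (A := C)) ∘ₗ
            Coalgebra.comul := by
          rw [Coalgebra.coassoc_symm]
      _ = LinearMap.lTensor C ((TensorProduct.rid R C).toLinearMap ∘ₗ
            LinearMap.lTensor C t ∘ₗ Coalgebra.comul) ∘ₗ Coalgebra.comul := by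
          rw [← LinearMap.comp_assoc, ← LinearMap.comp_assoc, key]
          rw [LinearMap.lTensor_comp]
          simp [LinearMap.comp_assoc, LinearMap.lTensor_comp]
  exact LinearMap.congr_fun h b

/-- left covariance of the first-order differential calculus
`d a = (t^1_L a, …, t^n_L a)`: componentwise,
`Δ_L(a • d b)_k = Δ(a * t^k_L b) = Δ(a) · (Σ b_(1) ⊗ t^k_L(b_(2)))`. -/
theorem left_covariance (R H : Type*) [CommRing R] [Ring H] [Bialgebra R H]
    {n : ℕ} (t : Fin n → (H →ₗ[R] R)) :
    ∀ (a b : H) (k : Fin n),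
      Coalgebra.comul (R := R) (a * tL R H (t k) b) =
        Coalgebra.comul (R := R) a *
          (LinearMap.lTensor H (tL R H (t k)) (Coalgebra.comul (R := R) b)) := by
  intro a b k
  rw [Bialgebra.comul_mul, comul_tL]
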